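/- Let b = 5·2^n with n ≥ 5. For every pair (p, q) with 0 ≤ q < p ≤ 4 and (p, q) ≠ (3, 1), there exists a base-b difference pair (u, v) such that the least L ≥ 0 for which both coordinates of K^L(u, v) are divisible by 2^n satisfies K^L(u, v) = (p·2^n, q·2^n) and L equals exactly: n if (p, q) ∈ {(4, 1), (3, 0), (4, 0)}; 2n if (p, q) ∈ {(4, 2), (2, 0)}; and 2n + 2 if (p, q) ∈ {(1, 0), (2, 1), (3, 2), (4, 3)}. -/
import Mathlib

/-- The four base-`b` digits of `x` (viewed as a 4-digit string with leading
zeros allowed), sorted in decreasing order. -/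
def sortedDigits (b x : ℕ) : List ℕ :=
  List.insertionSort (· ≥ ·) [x % b, x / b % b, x / b ^ 2 % b, x / b ^ 3 % b]

/-- The 4-digit base-`b` Kaprekar function `K_b(x) = D - A`. -/
def Kap (b x : ℕ) : ℕ :=
  let l := sortedDigits b x
  (l[0]! * b ^ 3 + l[1]! * b ^ 2 + l[2]! * b + l[3]!) -
    (l[3]! * b ^ 3 + l[2]! * b ^ 2 + l[1]! * b + l[0]!)

/-- The difference pair `(a₃ - a₀, a₂ - a₁)` of a 4-digit base-`b` input. -/
def diffPair (b x : ℕ) : ℕ × ℕ :=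
  let l := sortedDigits b x
  (l[0]! - l[3]!, l[1]! - l[2]!)

/-- `S_b`: the set of 4-digit base-`b` inputs whose sequence of Kaprekar
iterates is eventually constant and nonzero. -/
def KapSet (b : ℕ) : Set ℕ :=
  {x | x < b ^ 4 ∧
    ∃ t, (∀ s, t ≤ s → (Kap b)^[s] x = (Kap b)^[t] x) ∧ (Kap b)^[t] x ≠ 0}

/-- Arrange the two coordinates of a pair in decreasing order. -/
def sort2 (p : ℕ × ℕ) : ℕ × ℕ := (max p.1 p.2, min p.1 p.2)

/-- A base-`b` difference pair: `b - 1 ≥ d ≥ d' ≥ 0`. -/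
def IsDiffPair (b : ℕ) (p : ℕ × ℕ) : Prop := p.2 ≤ p.1 ∧ p.1 ≤ b - 1

/-- The Kaprekar map on base-`b` difference pairs. -/
def Kpair (b : ℕ) (p : ℕ × ℕ) : ℕ × ℕ :=
  if p.1 = 0 ∧ p.2 = 0 then (0, 0)
  else if p.2 = 0 then
    -- type (c)
    sort2 (p.1 - 1, b - p.1)
  else if p.1 = p.2 ∨ p.1 + p.2 = b then
    -- type (b)
    sort2 ((2 * (p.1 : ℤ) - ((b : ℤ) - 1)).natAbs,
           (2 * (p.1 : ℤ) - ((b : ℤ) + 1)).natAbs)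
  else
    -- type (a)
    sort2 ((2 * (p.1 : ℤ) - (b : ℤ)).natAbs, (2 * (p.2 : ℤ) - (b : ℤ)).natAbs)

/-! ### Auxiliary lemmas -/

lemma kpair_a {b x y : ℕ} (hy : y ≠ 0) (hne : x ≠ y) (hsum : x + y ≠ b) :
    Kpair b (x, y) = (max ((2*(x:ℤ) - b).natAbs) ((2*(y:ℤ) - b).natAbs),
                      min ((2*(x:ℤ) - b).natAbs) ((2*(y:ℤ) - b).natAbs)) := by
  unfold Kpair
  rw [if_neg (by simp [hy]), if_neg (by simpa using hy), if_neg (by simp [hne, hsum])]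
  rfl

lemma kpair_c {b x : ℕ} (hx : x ≠ 0) : Kpair b (x, 0) = (max (x-1) (b-x), min (x-1) (b-x)) := by
  unfold Kpair
  rw [if_neg (by simp [hx]), if_pos (by simp)]
  rfl

lemma kpair_bsum {b x y : ℕ} (hy : y ≠ 0) (hsum : x + y = b) :
    Kpair b (x, y) = (max ((2*(x:ℤ) - ((b:ℤ)-1)).natAbs) ((2*(x:ℤ) - ((b:ℤ)+1)).natAbs),
                      min ((2*(x:ℤ) - ((b:ℤ)-1)).natAbs) ((2*(x:ℤ) - ((b:ℤ)+1)).natAbs)) := by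
  unfold Kpair
  rw [if_neg (by simp [hy]), if_neg (by simpa using hy), if_pos (by simp [hsum])]
  rfl

lemma pow_split {a : ℕ} (h : 1 ≤ a) : (2:ℕ)^a = 2*2^(a-1) := by
  conv_lhs => rw [show a = (a-1)+1 by omega]
  rw [pow_succ]; ring

lemma pow_mul_odd_ne {u v a c : ℕ} (hu : Odd u) (hv : Odd v) (huv : a ≠ c ∨ u ≠ v) :
    2^a * u ≠ 2^c * v := by
  intro h
  rcases lt_trichotomy a c with hlt | heq | hgt
  · have hc : (2:ℕ)^c = 2^a * 2^(c-a) := by rw [← pow_add]; congr 1; omega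
    rw [hc, mul_assoc] at h
    have h2 := Nat.eq_of_mul_eq_mul_left (Nat.two_pow_pos a) h
    rw [pow_split (by omega : 1 ≤ c - a)] at h2
    obtain ⟨w, hw⟩ := hu
    have : u = 2 * (2^(c-a-1) * v) := by rw [h2]; ring
    omega
  · subst heq
    have h2 := Nat.eq_of_mul_eq_mul_left (Nat.two_pow_pos a) h
    rcases huv with h' | h' <;> [exact h' rfl; exact h' h2]
  · have hc : (2:ℕ)^a = 2^c * 2^(a-c) := by rw [← pow_add]; congr 1; omega
    rw [hc, mul_assoc] at h
    have h2 := Nat.eq_of_mul_eq_mul_left (Nat.two_pow_pos c) h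
    rw [pow_split (by omega : 1 ≤ a - c)] at h2
    obtain ⟨w, hw⟩ := hv
    have : v = 2 * (2^(a-c-1) * u) := by rw [← h2]; ring
    omega

lemma not_dvd_pow_mul_odd {n j u : ℕ} (hj : j < n) (hu : Odd u) : ¬ 2^n ∣ 2^j * u := by
  intro h
  have hn : (2:ℕ)^n = 2^j * 2^(n-j) := by rw [← pow_add]; congr 1; omega
  rw [hn] at h
  have h2 : (2:ℕ)^(n-j) ∣ u := (mul_dvd_mul_iff_left (by positivity : (2:ℕ)^j ≠ 0)).mp h
  have h3 : 2 ∣ u := dvd_trans (dvd_pow_self 2 (by omega : n - j ≠ 0)) h2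
  obtain ⟨w, hw⟩ := hu; omega

lemma coord_factor {n t m : ℕ} (ht : t ≤ n) : 5*2^n - 2^t*m = 2^t * (5*2^(n-t) - m) := by
  have h : (5:ℕ)*2^n = 2^t*(5*2^(n-t)) := by
    rw [show (5:ℕ)*2^n = 5*2^(t+(n-t)) by congr 2; omega, pow_add]; ring
  rw [h, ← Nat.mul_sub]

lemma coord_not_dvd {n t m : ℕ} (htn : t < n) (hm : Odd m) (hle : m ≤ 5*2^(n-t)) :
    ¬ 2^n ∣ (5*2^n - 2^t*m) := by
  rw [coord_factor (by omega)]
  refine not_dvd_pow_mul_odd htn ?_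
  have hev : Even (5*2^(n-t)) := by
    rw [pow_split (by omega : 1 ≤ n - t)]
    exact ⟨5*2^(n-t-1), by ring⟩
  exact Nat.Even.sub_odd hle hev hm

lemma not_dvd_odd {n x : ℕ} (hn : 1 ≤ n) (hx : Odd x) : ¬ 2^n ∣ x := by
  intro h
  obtain ⟨w, hw⟩ := hx
  have h2 : (2:ℕ) ∣ x := dvd_trans (dvd_pow_self 2 (by omega)) h
  omega

lemma pow_add_pow_ne {s k n : ℕ} (hk : 1 ≤ k) : (2:ℕ)^s + 2^(k+s) ≠ 2^n := by
  have h1 : (2:ℕ)^s + 2^(k+s) = 2^s * (1 + 2^k) := by rw [pow_add]; ring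
  have h2 : (2:ℕ)^n = 2^n * 1 := by ring
  rw [h1, h2]
  refine pow_mul_odd_ne ⟨2^(k-1), ?_⟩ (by norm_num) (Or.inr (by have := Nat.two_pow_pos k; omega))
  rw [pow_split hk]; ring

/-! ### Phase lemmas -/

lemma phaseA (n c c' : ℕ) (hn : 5 ≤ n) (h1 : 1 ≤ c') (h2 : c' < c) (h3 : c ≤ 9) (h4 : c + c' ≤ 10) :
    ∀ s, 1 ≤ s → s ≤ n - 1 →
      (Kpair (5*2^n))^[s] (c, c') = (5*2^n - 2^s*c', 5*2^n - 2^s*c) := by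
  intro s
  induction s with
  | zero => omega
  | succ s ih =>
    intro _ hs
    have h32 : (32:ℕ) ≤ 2^n := by
      calc (32:ℕ) = 2^5 := by norm_num
      _ ≤ 2^n := Nat.pow_le_pow_right (by norm_num) hn
    rcases Nat.eq_zero_or_pos s with rfl | hs1
    · rw [Function.iterate_one]
      rw [kpair_a (by omega) (by omega) (by omega)]
      have e1 : (2:ℕ)^(0+1) = 2 := by norm_num
      simp only [Prod.mk.injEq]; constructor <;> omega
    · rw [Function.iterate_succ_apply', ih (by omega) (by omega)]
      have e0 : (2:ℕ)^s*1 ≤ 2^(n-2)*1 :=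
        Nat.mul_le_mul (Nat.pow_le_pow_right (by norm_num) (by omega)) le_rfl
      have e1 : (2:ℕ)^(s+1)*c = 2*(2^s*c) := by rw [pow_succ]; ring
      have e1' : (2:ℕ)^(s+1)*c' = 2*(2^s*c') := by rw [pow_succ]; ring
      have e2 : (2:ℕ)^s*(c+c') ≤ 2^(n-2)*10 :=
        Nat.mul_le_mul (Nat.pow_le_pow_right (by norm_num) (by omega)) h4
      have e2' : (2:ℕ)^s*(c+c') = 2^s*c + 2^s*c' := by ring
      have e3 : (2:ℕ)^n = 2^(n-2)*4 := by
        rw [show (2:ℕ)^n = 2^((n-2)+2) by congr 1; omega, pow_add]; norm_num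
      have e4 : 2^s*c' < 2^s*c := mul_lt_mul_of_pos_left h2 (Nat.two_pow_pos s)
      rw [kpair_a (by omega) (by omega) (by omega)]
      simp only [Prod.mk.injEq]; constructor <;> omega

lemma phaseA3 (n k : ℕ) (hn : 5 ≤ n) (hk : 1 ≤ k) (hkn : k + 1 ≤ n) :
    ∀ s, 1 ≤ s → s ≤ n - k →
      (Kpair (5*2^n))^[s] (5*2^k, 5) = (5*2^n - 5*2^s, 5*2^n - 5*2^(k+s)) := by
  intro s
  induction s with
  | zero => omega
  | succ s ih =>
    intro _ hs
    have fn : (2:ℕ)^n = 2*2^(n-1) := pow_split (by omega)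
    rcases Nat.eq_zero_or_pos s with rfl | hs1
    · rw [Function.iterate_one]
      have hk2 : (2:ℕ)^k ≤ 2^(n-1) := Nat.pow_le_pow_right (by norm_num) (by omega)
      have hk0 : (2:ℕ) ≤ 2^k := by
        calc (2:ℕ) = 2^1 := by norm_num
        _ ≤ 2^k := Nat.pow_le_pow_right (by norm_num) hk
      have e1 : (2:ℕ)^(k+(0+1)) = 2*2^k := by rw [show k+(0+1) = k+1 by omega, pow_succ]; ring
      have e2 : (2:ℕ)^(0+1) = 2 := by norm_num
      have e3 : (2:ℕ)^(k+1) ≤ 2^n := Nat.pow_le_pow_right (by norm_num) (by omega)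
      rw [kpair_a (by omega) (by omega) (by omega)]
      simp only [Prod.mk.injEq]; constructor <;> omega
    · rw [Function.iterate_succ_apply', ih (by omega) (by omega)]
      have a1 : (2:ℕ)^(s+1) = 2*2^s := by rw [pow_succ]; ring
      have a2 : (2:ℕ)^(k+(s+1)) = 2*2^(k+s) := by
        rw [show k+(s+1) = (k+s)+1 by omega, pow_succ]; ring
      have a3 : (2:ℕ)^(k+s) ≤ 2^(n-1) := Nat.pow_le_pow_right (by norm_num) (by omega)
      have a5 : (2:ℕ)^s < 2^(k+s) := Nat.pow_lt_pow_right (by norm_num) (by omega)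
      have F : (2:ℕ)^s + 2^(k+s) ≠ 2^n := pow_add_pow_ne hk
      rw [kpair_a (by omega) (by omega) (by omega)]
      simp only [Prod.mk.injEq]; constructor <;> omega

lemma phaseC_step (n m j : ℕ) (hm : Odd m) (hj : 2^j*(m+1) < 5*2^n)
    (hb : 2^(j+1)*(m+1) ≤ 5*2^n) :
    Kpair (5*2^n) (5*2^n - 2^j*m, 5*2^n - 2^j*(m+1))
      = (5*2^n - 2^(j+1)*m, 5*2^n - 2^(j+1)*(m+1)) := by
  obtain ⟨w, hw⟩ := hm
  have f1 : (2:ℕ)^(j+1)*(m+1) = 2*(2^j*(m+1)) := by rw [pow_succ]; ring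
  have f2 : (2:ℕ)^(j+1)*m = 2*(2^j*m) := by rw [pow_succ]; ring
  have f3 : (2:ℕ)^j*(m+1) = 2^j*m + 2^j := by ring
  have hp : (0:ℕ) < 2^j := Nat.two_pow_pos j
  have F : (2:ℕ)^j*(2*m+1) ≠ 2^n*5 :=
    pow_mul_odd_ne ⟨m, by ring⟩ ⟨2, by norm_num⟩ (Or.inr (by omega))
  have f6 : (2:ℕ)^j*(2*m+1) = 2*(2^j*m) + 2^j := by ring
  rw [kpair_a (by omega) (by omega) (by omega)]
  simp only [Prod.mk.injEq]; constructor <;> omega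

lemma phaseC_iter (n m : ℕ) (hm : Odd m) :
    ∀ i j, 1 ≤ j → 2^(j+i)*(m+1) ≤ 5*2^n →
    (Kpair (5*2^n))^[i] (5*2^n - 2^j*m, 5*2^n - 2^j*(m+1))
      = (5*2^n - 2^(j+i)*m, 5*2^n - 2^(j+i)*(m+1)) := by
  intro i
  induction i with
  | zero => intro j hj hb; simp
  | succ i ih =>
    intro j hj hb
    have g0 : (2:ℕ)^(j+(i+1)) = 2^((j+1)+i) := by congr 1; omega
    have g1 : (2:ℕ)^j*(m+1) < 2^(j+(i+1))*(m+1) :=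
      mul_lt_mul_of_pos_right (Nat.pow_lt_pow_right (by norm_num) (by omega)) (by omega)
    have g2 : (2:ℕ)^(j+1)*(m+1) ≤ 2^(j+(i+1))*(m+1) :=
      Nat.mul_le_mul_right _ (Nat.pow_le_pow_right (by norm_num) (by omega))
    rw [Function.iterate_succ_apply, phaseC_step n m j hm (by omega) (by omega)]
    rw [ih (j+1) (by omega) (by rw [← g0]; exact hb)]
    rw [← g0]

lemma phaseCp_step (n a j : ℕ) (hn : 5 ≤ n) (ha : a = 1 ∨ a = 3) (hjn : j ≤ n-1) :
    Kpair (5*2^n) (a*2^n + 2^j, a*2^n - 2^j) = ((4-a)*2^n + 2^(j+1), (4-a)*2^n - 2^(j+1)) := by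
  have fn : (2:ℕ)^n = 2*2^(n-1) := pow_split (by omega)
  have f5 : (2:ℕ)^(j+1) = 2*2^j := by rw [pow_succ]; ring
  have fj : (2:ℕ)^j ≤ 2^(n-1) := Nat.pow_le_pow_right (by norm_num) (by omega)
  have hp : (0:ℕ) < 2^j := Nat.two_pow_pos j
  rcases ha with rfl | rfl <;>
  · rw [kpair_a (by omega) (by omega) (by omega)]
    simp only [Prod.mk.injEq]; constructor <;> omega

lemma phaseCp_iter (n : ℕ) (hn : 5 ≤ n) :
    ∀ i a j, (a = 1 ∨ a = 3) → 1 ≤ j → j + i ≤ n →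
    (Kpair (5*2^n))^[i] (a*2^n + 2^j, a*2^n - 2^j)
      = ((if Even i then a else 4-a)*2^n + 2^(j+i),
         (if Even i then a else 4-a)*2^n - 2^(j+i)) := by
  intro i
  induction i with
  | zero => intro a j ha hj hji; simp
  | succ i ih =>
    intro a j ha hj hji
    rw [Function.iterate_succ_apply, phaseCp_step n a j hn ha (by omega),
        ih (4-a) (j+1) (by rcases ha with rfl|rfl; exacts [Or.inr rfl, Or.inl rfl]) (by omega)
          (by omega)]
    have hrw : j + 1 + i = j + (i+1) := by omega
    rw [hrw]
    rcases Nat.even_or_odd i with he | ho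
    · have h1 : ¬ Even (i+1) := by simp [Nat.even_add_one, he]
      simp [he, h1]
    · have h0 : ¬ Even i := Nat.not_even_iff_odd.mpr ho
      have h1 : Even (i+1) := Nat.even_add_one.mpr h0
      rcases ha with rfl | rfl <;> simp [h0, h1]

lemma group1_final (n c c' : ℕ) (hn : 5 ≤ n) (h1 : 1 ≤ c') (h2 : c' < c) (h3 : c ≤ 5)
    (h4 : c + c' ≤ 9) :
    (Kpair (5*2^n))^[n] (c, c') = (5*2^n - 2^n*c', 5*2^n - 2^n*c) := by
  have key : (Kpair (5*2^n))^[(n-1)+1] (c, c') = (5*2^n - 2^n*c', 5*2^n - 2^n*c) := by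
    rw [Function.iterate_succ_apply',
        phaseA n c c' hn h1 h2 (by omega) (by omega) (n-1) (by omega) le_rfl]
    have fn : (2:ℕ)^n = 2*2^(n-1) := pow_split (by omega)
    have e1 : 2^n*c = 2*(2^(n-1)*c) := by rw [fn]; ring
    have e1' : 2^n*c' = 2*(2^(n-1)*c') := by rw [fn]; ring
    have e2 : (2:ℕ)^(n-1)*(c+c') ≤ 2^(n-1)*9 := Nat.mul_le_mul le_rfl h4
    have e2' : (2:ℕ)^(n-1)*(c+c') = 2^(n-1)*c + 2^(n-1)*c' := by ring
    have e3 : (2:ℕ)^(n-1)*c ≤ 2^(n-1)*5 := Nat.mul_le_mul le_rfl h3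
    have e4 : 2^(n-1)*c' < 2^(n-1)*c := mul_lt_mul_of_pos_left h2 (Nat.two_pow_pos (n-1))
    have e5 : 0 < 2^(n-1)*c' := Nat.mul_pos (Nat.two_pow_pos _) (by omega)
    rw [kpair_a (by omega) (by omega) (by omega)]
    simp only [Prod.mk.injEq]; constructor <;> omega
  rw [show n-1+1 = n by omega] at key
  exact key

lemma group2 (n c c' a : ℕ) (hn : 5 ≤ n)
    (hc : (c = 9 ∧ c' = 1) ∨ (c = 7 ∧ c' = 3))
    (ha : a = if Even (n-1) then c-6 else 10-c) :
    (Kpair (5*2^n))^[2*n] (c, c') = ((a+1)*2^n, (a-1)*2^n) ∧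
    (∀ t, t < 2*n →
      ¬(2^n ∣ ((Kpair (5*2^n))^[t] (c,c')).1 ∧ 2^n ∣ ((Kpair (5*2^n))^[t] (c,c')).2)) := by
  have h32 : (32:ℕ) ≤ 2^n := by
    calc (32:ℕ) = 2^5 := by norm_num
    _ ≤ 2^n := Nat.pow_le_pow_right (by norm_num) hn
  have fn : (2:ℕ)^n = 2*2^(n-1) := pow_split (by omega)
  obtain ⟨rfl, rfl⟩ | ⟨rfl, rfl⟩ := hc
  -- c = 9, c' = 1
  · have hA := phaseA n 9 1 hn (by omega) (by omega) (by omega) (by omega)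
    have hE : (Kpair (5*2^n))^[n] (9,1) = (4*2^n+1, 4*2^n-1) := by
      have key : (Kpair (5*2^n))^[(n-1)+1] (9,1) = (4*2^n+1, 4*2^n-1) := by
        rw [Function.iterate_succ_apply', hA (n-1) (by omega) le_rfl,
            kpair_bsum (by omega) (by omega)]
        simp only [Prod.mk.injEq]; constructor <;> omega
      rwa [show n-1+1 = n by omega] at key
    have hF : (Kpair (5*2^n))^[n+1] (9,1) = (3*2^n+2^1, 3*2^n-2^1) := by
      rw [Function.iterate_succ_apply', hE, kpair_a (by omega) (by omega) (by omega)]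
      have e1 : (2:ℕ)^1 = 2 := by norm_num
      simp only [Prod.mk.injEq]; constructor <;> omega
    constructor
    · have hfin : (Kpair (5*2^n))^[(n-1)+(n+1)] (9,1)
          = ((if Even (n-1) then 3 else 4-3)*2^n + 2^(1+(n-1)),
             (if Even (n-1) then 3 else 4-3)*2^n - 2^(1+(n-1))) := by
        rw [Function.iterate_add_apply, hF]
        exact phaseCp_iter n hn (n-1) 3 1 (Or.inr rfl) le_rfl (by omega)
      rw [show (n-1)+(n+1) = 2*n by omega, show 1+(n-1) = n by omega] at hfin
      rw [hfin]
      rcases Nat.even_or_odd (n-1) with he | ho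
      · rw [if_pos he] at ha ⊢
        subst ha; simp only [Prod.mk.injEq]; constructor <;> omega
      · rw [if_neg (Nat.not_even_iff_odd.mpr ho)] at ha ⊢
        subst ha; simp only [Prod.mk.injEq]; constructor <;> omega
    · intro t ht hdvd
      rcases Nat.eq_zero_or_pos t with rfl | h1
      · simp only [Function.iterate_zero, id_eq] at hdvd
        exact absurd (Nat.le_of_dvd (by norm_num) hdvd.2) (by omega)
      · rcases Nat.lt_or_ge t n with h2 | h2
        · rw [hA t h1 (by omega)] at hdvd
          have h2t : (2:ℕ) ≤ 2^(n-t) := by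
            calc (2:ℕ) = 2^1 := by norm_num
            _ ≤ 2^(n-t) := Nat.pow_le_pow_right (by norm_num) (by omega)
          exact coord_not_dvd (by omega) ⟨4, by norm_num⟩ (by omega) hdvd.2
        · rcases Nat.eq_or_lt_of_le h2 with rfl | h3
          · rw [hE] at hdvd
            have d := Nat.dvd_sub hdvd.1 hdvd.2
            rw [show 4*2^n+1 - (4*2^n-1) = 2 by omega] at d
            exact absurd (Nat.le_of_dvd (by norm_num) d) (by omega)
          · obtain ⟨i, rfl⟩ : ∃ i, t = i + (n+1) := ⟨t-(n+1), by omega⟩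
            rw [Function.iterate_add_apply, hF,
                phaseCp_iter n hn i 3 1 (Or.inr rfl) le_rfl (by omega)] at hdvd
            have dA : 2^n ∣ (if Even i then 3 else 4-3)*2^n :=
              ⟨(if Even i then 3 else 4-3), mul_comm _ _⟩
            have d2 := Nat.dvd_sub hdvd.1 dA
            rw [Nat.add_sub_cancel_left] at d2
            have hled := Nat.le_of_dvd (Nat.two_pow_pos _) d2
            have hle : (2:ℕ)^(1+i) ≤ 2^(n-1) := Nat.pow_le_pow_right (by norm_num) (by omega)
            omega
  -- c = 7, c' = 3
  · have hA := phaseA n 7 3 hn (by omega) (by omega) (by omega) (by omega)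
    have hE : (Kpair (5*2^n))^[n] (7,3) = (2*2^n+1, 2*2^n-1) := by
      have key : (Kpair (5*2^n))^[(n-1)+1] (7,3) = (2*2^n+1, 2*2^n-1) := by
        rw [Function.iterate_succ_apply', hA (n-1) (by omega) le_rfl,
            kpair_bsum (by omega) (by omega)]
        simp only [Prod.mk.injEq]; constructor <;> omega
      rwa [show n-1+1 = n by omega] at key
    have hF : (Kpair (5*2^n))^[n+1] (7,3) = (1*2^n+2^1, 1*2^n-2^1) := by
      rw [Function.iterate_succ_apply', hE, kpair_a (by omega) (by omega) (by omega)]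
      have e1 : (2:ℕ)^1 = 2 := by norm_num
      simp only [Prod.mk.injEq]; constructor <;> omega
    constructor
    · have hfin : (Kpair (5*2^n))^[(n-1)+(n+1)] (7,3)
          = ((if Even (n-1) then 1 else 4-1)*2^n + 2^(1+(n-1)),
             (if Even (n-1) then 1 else 4-1)*2^n - 2^(1+(n-1))) := by
        rw [Function.iterate_add_apply, hF]
        exact phaseCp_iter n hn (n-1) 1 1 (Or.inl rfl) le_rfl (by omega)
      rw [show (n-1)+(n+1) = 2*n by omega, show 1+(n-1) = n by omega] at hfin
      rw [hfin]
      rcases Nat.even_or_odd (n-1) with he | ho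
      · rw [if_pos he] at ha ⊢
        subst ha; simp only [Prod.mk.injEq]; constructor <;> omega
      · rw [if_neg (Nat.not_even_iff_odd.mpr ho)] at ha ⊢
        subst ha; simp only [Prod.mk.injEq]; constructor <;> omega
    · intro t ht hdvd
      rcases Nat.eq_zero_or_pos t with rfl | h1
      · simp only [Function.iterate_zero, id_eq] at hdvd
        exact absurd (Nat.le_of_dvd (by norm_num) hdvd.2) (by omega)
      · rcases Nat.lt_or_ge t n with h2 | h2
        · rw [hA t h1 (by omega)] at hdvd
          have h2t : (2:ℕ) ≤ 2^(n-t) := by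
            calc (2:ℕ) = 2^1 := by norm_num
            _ ≤ 2^(n-t) := Nat.pow_le_pow_right (by norm_num) (by omega)
          exact coord_not_dvd (by omega) ⟨3, by norm_num⟩ (by omega) hdvd.2
        · rcases Nat.eq_or_lt_of_le h2 with rfl | h3
          · rw [hE] at hdvd
            have d := Nat.dvd_sub hdvd.1 hdvd.2
            rw [show 2*2^n+1 - (2*2^n-1) = 2 by omega] at d
            exact absurd (Nat.le_of_dvd (by norm_num) d) (by omega)
          · obtain ⟨i, rfl⟩ : ∃ i, t = i + (n+1) := ⟨t-(n+1), by omega⟩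
            rw [Function.iterate_add_apply, hF,
                phaseCp_iter n hn i 1 1 (Or.inl rfl) le_rfl (by omega)] at hdvd
            have dA : 2^n ∣ (if Even i then 1 else 4-1)*2^n :=
              ⟨(if Even i then 1 else 4-1), mul_comm _ _⟩
            have d2 := Nat.dvd_sub hdvd.1 dA
            rw [Nat.add_sub_cancel_left] at d2
            have hled := Nat.le_of_dvd (Nat.two_pow_pos _) d2
            have hle : (2:ℕ)^(1+i) ≤ 2^(n-1) := Nat.pow_le_pow_right (by norm_num) (by omega)
            omega

lemma group3_1 (n : ℕ) (hn : 5 ≤ n) :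
    (Kpair (5*2^n))^[2*n+2] (5*2^1, 5) = (4*2^n, 3*2^n) ∧
    (∀ t, t < 2*n+2 →
      ¬(2^n ∣ ((Kpair (5*2^n))^[t] (5*2^1,5)).1 ∧ 2^n ∣ ((Kpair (5*2^n))^[t] (5*2^1,5)).2)) := by
  have h32 : (32:ℕ) ≤ 2^n := by
    calc (32:ℕ) = 2^5 := by norm_num
    _ ≤ 2^n := Nat.pow_le_pow_right (by norm_num) hn
  have fn : (2:ℕ)^n = 2*2^(n-1) := pow_split (by omega)
  have hA := phaseA3 n 1 hn (by omega) (by omega)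
  have hA' : (Kpair (5*2^n))^[n-1] (5*2^1, 5) = (5*2^n - 5*2^(n-1), 0) := by
    rw [hA (n-1) (by omega) (by omega), show 1+(n-1) = n by omega]
    norm_num
  have hE1 : (Kpair (5*2^n))^[n] (5*2^1, 5) = (5*2^(n-1), 5*2^(n-1) - 1) := by
    have key : (Kpair (5*2^n))^[(n-1)+1] (5*2^1, 5) = (5*2^(n-1), 5*2^(n-1) - 1) := by
      rw [Function.iterate_succ_apply', hA', kpair_c (by omega)]
      simp only [Prod.mk.injEq]; constructor <;> omega
    rwa [show n-1+1 = n by omega] at key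
  have hE2 : (Kpair (5*2^n))^[n+1] (5*2^1, 5) = (2, 0) := by
    rw [Function.iterate_succ_apply', hE1, kpair_a (by omega) (by omega) (by omega)]
    simp only [Prod.mk.injEq]; constructor <;> omega
  have hE3 : (Kpair (5*2^n))^[n+2] (5*2^1, 5) = (5*2^n - 2, 1) := by
    rw [Function.iterate_succ_apply', hE2, kpair_c (by omega)]
    simp only [Prod.mk.injEq]; constructor <;> omega
  have hE4 : (Kpair (5*2^n))^[n+3] (5*2^1, 5) = (5*2^n - 2^1*1, 5*2^n - 2^1*2) := by
    rw [Function.iterate_succ_apply', hE3, kpair_a (by omega) (by omega) (by omega)]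
    have e1 : (2:ℕ)^1 = 2 := by norm_num
    simp only [Prod.mk.injEq]; constructor <;> omega
  constructor
  · have hfin : (Kpair (5*2^n))^[(n-1)+(n+3)] (5*2^1, 5)
        = (5*2^n - 2^(1+(n-1))*1, 5*2^n - 2^(1+(n-1))*2) := by
      rw [Function.iterate_add_apply, hE4]
      exact phaseC_iter n 1 ⟨0, by norm_num⟩ (n-1) 1 le_rfl
        (by rw [show 1+(n-1) = n by omega]; omega)
    rw [show (n-1)+(n+3) = 2*n+2 by omega, show 1+(n-1) = n by omega] at hfin
    rw [hfin]
    simp only [Prod.mk.injEq]; constructor <;> omega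
  · intro t ht hdvd
    rcases Nat.eq_zero_or_pos t with rfl | h1
    · simp only [Function.iterate_zero, id_eq] at hdvd
      exact absurd (Nat.le_of_dvd (by norm_num) hdvd.2) (by omega)
    rcases Nat.lt_or_ge t n with h2 | h2
    · rw [hA t h1 (by omega)] at hdvd
      have hfst := hdvd.1
      rw [show (5:ℕ)*2^t = 2^t*5 by ring] at hfst
      exact coord_not_dvd (by omega) ⟨2, by norm_num⟩
        (by have := Nat.two_pow_pos (n-t); omega) hfst
    rcases Nat.lt_or_ge t (n+3) with h3 | h3
    · rcases (by omega : n = t ∨ n+1 = t ∨ n+2 = t) with rfl | rfl | rfl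
      · rw [hE1] at hdvd
        have d := Nat.dvd_sub hdvd.1 hdvd.2
        rw [show 5*2^(n-1) - (5*2^(n-1) - 1) = 1 by omega] at d
        exact absurd (Nat.le_of_dvd (by norm_num) d) (by omega)
      · rw [hE2] at hdvd
        exact absurd (Nat.le_of_dvd (by norm_num) hdvd.1) (by omega)
      · rw [hE3] at hdvd
        exact absurd (Nat.le_of_dvd (by norm_num) hdvd.2) (by omega)
    · obtain ⟨i, rfl⟩ : ∃ i, t = i + (n+3) := ⟨t-(n+3), by omega⟩
      have hle : (2:ℕ)^(1+i) ≤ 2^(n-1) := Nat.pow_le_pow_right (by norm_num) (by omega)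
      rw [Function.iterate_add_apply, hE4,
          phaseC_iter n 1 ⟨0, by norm_num⟩ i 1 le_rfl (by omega)] at hdvd
      have d := Nat.dvd_sub hdvd.1 hdvd.2
      rw [show 5*2^n - 2^(1+i)*1 - (5*2^n - 2^(1+i)*2) = 2^(1+i) by omega] at d
      have := Nat.le_of_dvd (Nat.two_pow_pos _) d
      omega

lemma group3_2 (n : ℕ) (hn : 5 ≤ n) :
    (Kpair (5*2^n))^[2*n+2] (5*2^2, 5) = (2*2^n, 1*2^n) ∧
    (∀ t, t < 2*n+2 →
      ¬(2^n ∣ ((Kpair (5*2^n))^[t] (5*2^2,5)).1 ∧ 2^n ∣ ((Kpair (5*2^n))^[t] (5*2^2,5)).2)) := by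
  have h32 : (32:ℕ) ≤ 2^n := by
    calc (32:ℕ) = 2^5 := by norm_num
    _ ≤ 2^n := Nat.pow_le_pow_right (by norm_num) hn
  have fn : (2:ℕ)^n = 2*2^(n-1) := pow_split (by omega)
  have fn2 : (2:ℕ)^(n-1) = 2*2^(n-2) := pow_split (by omega)
  have fn3 : (2:ℕ)^(n-2) = 2*2^(n-3) := pow_split (by omega)
  have hA := phaseA3 n 2 hn (by omega) (by omega)
  have hA' : (Kpair (5*2^n))^[n-2] (5*2^2, 5) = (5*2^n - 5*2^(n-2), 0) := by
    rw [hA (n-2) (by omega) (by omega), show 2+(n-2) = n by omega]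
    norm_num
  have hE1 : (Kpair (5*2^n))^[n-1] (5*2^2, 5)
      = (5*2^n - 5*2^(n-2) - 1, 5*2^(n-2)) := by
    have key : (Kpair (5*2^n))^[(n-2)+1] (5*2^2, 5)
        = (5*2^n - 5*2^(n-2) - 1, 5*2^(n-2)) := by
      rw [Function.iterate_succ_apply', hA', kpair_c (by omega)]
      simp only [Prod.mk.injEq]; constructor <;> omega
    rwa [show n-2+1 = n-1 by omega] at key
  have hE2 : (Kpair (5*2^n))^[n] (5*2^2, 5) = (5*2^(n-1), 5*2^(n-1) - 2) := by
    have key : (Kpair (5*2^n))^[(n-1)+1] (5*2^2, 5) = (5*2^(n-1), 5*2^(n-1) - 2) := by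
      rw [Function.iterate_succ_apply', hE1, kpair_a (by omega) (by omega) (by omega)]
      simp only [Prod.mk.injEq]; constructor <;> omega
    rwa [show n-1+1 = n by omega] at key
  have hE3 : (Kpair (5*2^n))^[n+1] (5*2^2, 5) = (4, 0) := by
    rw [Function.iterate_succ_apply', hE2, kpair_a (by omega) (by omega) (by omega)]
    simp only [Prod.mk.injEq]; constructor <;> omega
  have hE4 : (Kpair (5*2^n))^[n+2] (5*2^2, 5) = (5*2^n - 4, 3) := by
    rw [Function.iterate_succ_apply', hE3, kpair_c (by omega)]
    simp only [Prod.mk.injEq]; constructor <;> omega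
  have hE5 : (Kpair (5*2^n))^[n+3] (5*2^2, 5) = (5*2^n - 2^1*3, 5*2^n - 2^1*4) := by
    rw [Function.iterate_succ_apply', hE4, kpair_a (by omega) (by omega) (by omega)]
    have e1 : (2:ℕ)^1 = 2 := by norm_num
    simp only [Prod.mk.injEq]; constructor <;> omega
  constructor
  · have hfin : (Kpair (5*2^n))^[(n-1)+(n+3)] (5*2^2, 5)
        = (5*2^n - 2^(1+(n-1))*3, 5*2^n - 2^(1+(n-1))*4) := by
      rw [Function.iterate_add_apply, hE5]
      exact phaseC_iter n 3 ⟨1, by norm_num⟩ (n-1) 1 le_rfl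
        (by rw [show 1+(n-1) = n by omega]; omega)
    rw [show (n-1)+(n+3) = 2*n+2 by omega, show 1+(n-1) = n by omega] at hfin
    rw [hfin]
    simp only [Prod.mk.injEq]; constructor <;> omega
  · intro t ht hdvd
    rcases Nat.eq_zero_or_pos t with rfl | h1
    · simp only [Function.iterate_zero, id_eq] at hdvd
      exact absurd (Nat.le_of_dvd (by norm_num) hdvd.2) (by omega)
    rcases Nat.lt_or_ge t (n-1) with h2 | h2
    · rw [hA t h1 (by omega)] at hdvd
      have hfst := hdvd.1
      rw [show (5:ℕ)*2^t = 2^t*5 by ring] at hfst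
      exact coord_not_dvd (by omega) ⟨2, by norm_num⟩
        (by have := Nat.two_pow_pos (n-t); omega) hfst
    rcases Nat.lt_or_ge t (n+3) with h3 | h3
    · rcases (by omega : n-1 = t ∨ n = t ∨ n+1 = t ∨ n+2 = t) with rfl | rfl | rfl | rfl
      · rw [hE1] at hdvd
        exact not_dvd_odd (by omega) ⟨15*2^(n-3) - 1, by omega⟩ hdvd.1
      · rw [hE2] at hdvd
        have d := Nat.dvd_sub hdvd.1 hdvd.2
        rw [show 5*2^(n-1) - (5*2^(n-1) - 2) = 2 by omega] at d
        exact absurd (Nat.le_of_dvd (by norm_num) d) (by omega)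
      · rw [hE3] at hdvd
        exact absurd (Nat.le_of_dvd (by norm_num) hdvd.1) (by omega)
      · rw [hE4] at hdvd
        exact absurd (Nat.le_of_dvd (by norm_num) hdvd.2) (by omega)
    · obtain ⟨i, rfl⟩ : ∃ i, t = i + (n+3) := ⟨t-(n+3), by omega⟩
      have hle : (2:ℕ)^(1+i) ≤ 2^(n-1) := Nat.pow_le_pow_right (by norm_num) (by omega)
      rw [Function.iterate_add_apply, hE5,
          phaseC_iter n 3 ⟨1, by norm_num⟩ i 1 le_rfl (by omega)] at hdvd
      have d := Nat.dvd_sub hdvd.1 hdvd.2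
      rw [show 5*2^n - 2^(1+i)*3 - (5*2^n - 2^(1+i)*4) = 2^(1+i) by omega] at d
      have := Nat.le_of_dvd (Nat.two_pow_pos _) d
      omega

lemma group3_3 (n : ℕ) (hn : 5 ≤ n) :
    (Kpair (5*2^n))^[2*n+2] (5*2^3, 5) = (3*2^n, 2*2^n) ∧
    (∀ t, t < 2*n+2 →
      ¬(2^n ∣ ((Kpair (5*2^n))^[t] (5*2^3,5)).1 ∧ 2^n ∣ ((Kpair (5*2^n))^[t] (5*2^3,5)).2)) := by
  have h32 : (32:ℕ) ≤ 2^n := by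
    calc (32:ℕ) = 2^5 := by norm_num
    _ ≤ 2^n := Nat.pow_le_pow_right (by norm_num) hn
  have fn : (2:ℕ)^n = 2*2^(n-1) := pow_split (by omega)
  have fn2 : (2:ℕ)^(n-1) = 2*2^(n-2) := pow_split (by omega)
  have fn3 : (2:ℕ)^(n-2) = 2*2^(n-3) := pow_split (by omega)
  have fn4 : (2:ℕ)^(n-3) = 2*2^(n-4) := pow_split (by omega)
  have hA := phaseA3 n 3 hn (by omega) (by omega)
  have hA' : (Kpair (5*2^n))^[n-3] (5*2^3, 5) = (5*2^n - 5*2^(n-3), 0) := by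
    rw [hA (n-3) (by omega) (by omega), show 3+(n-3) = n by omega]
    norm_num
  have hE1 : (Kpair (5*2^n))^[n-2] (5*2^3, 5)
      = (5*2^n - 5*2^(n-3) - 1, 5*2^(n-3)) := by
    have key : (Kpair (5*2^n))^[(n-3)+1] (5*2^3, 5)
        = (5*2^n - 5*2^(n-3) - 1, 5*2^(n-3)) := by
      rw [Function.iterate_succ_apply', hA', kpair_c (by omega)]
      simp only [Prod.mk.injEq]; constructor <;> omega
    rwa [show n-3+1 = n-2 by omega] at key
  have hE2 : (Kpair (5*2^n))^[n-1] (5*2^3, 5)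
      = (5*2^n - 5*2^(n-2), 5*2^n - 5*2^(n-2) - 2) := by
    have key : (Kpair (5*2^n))^[(n-2)+1] (5*2^3, 5)
        = (5*2^n - 5*2^(n-2), 5*2^n - 5*2^(n-2) - 2) := by
      rw [Function.iterate_succ_apply', hE1, kpair_a (by omega) (by omega) (by omega)]
      simp only [Prod.mk.injEq]; constructor <;> omega
    rwa [show n-2+1 = n-1 by omega] at key
  have hE3 : (Kpair (5*2^n))^[n] (5*2^3, 5) = (5*2^(n-1), 5*2^(n-1) - 4) := by
    have key : (Kpair (5*2^n))^[(n-1)+1] (5*2^3, 5) = (5*2^(n-1), 5*2^(n-1) - 4) := by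
      rw [Function.iterate_succ_apply', hE2, kpair_a (by omega) (by omega) (by omega)]
      simp only [Prod.mk.injEq]; constructor <;> omega
    rwa [show n-1+1 = n by omega] at key
  have hE4 : (Kpair (5*2^n))^[n+1] (5*2^3, 5) = (8, 0) := by
    rw [Function.iterate_succ_apply', hE3, kpair_a (by omega) (by omega) (by omega)]
    simp only [Prod.mk.injEq]; constructor <;> omega
  have hE5 : (Kpair (5*2^n))^[n+2] (5*2^3, 5) = (5*2^n - 8, 7) := by
    rw [Function.iterate_succ_apply', hE4, kpair_c (by omega)]
    simp only [Prod.mk.injEq]; constructor <;> omega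
  have hE6 : (Kpair (5*2^n))^[n+3] (5*2^3, 5) = (5*2^n - 2^1*7, 5*2^n - 2^1*8) := by
    rw [Function.iterate_succ_apply', hE5, kpair_a (by omega) (by omega) (by omega)]
    have e1 : (2:ℕ)^1 = 2 := by norm_num
    simp only [Prod.mk.injEq]; constructor <;> omega
  have hC : (Kpair (5*2^n))^[2*n+1] (5*2^3, 5)
      = (5*2^n - 2^(n-1)*7, 5*2^n - 2^(n-1)*8) := by
    have key : (Kpair (5*2^n))^[(n-2)+(n+3)] (5*2^3, 5)
        = (5*2^n - 2^(1+(n-2))*7, 5*2^n - 2^(1+(n-2))*8) := by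
      rw [Function.iterate_add_apply, hE6]
      exact phaseC_iter n 7 ⟨3, by norm_num⟩ (n-2) 1 le_rfl
        (by rw [show 1+(n-2) = n-1 by omega]; omega)
    rwa [show (n-2)+(n+3) = 2*n+1 by omega, show 1+(n-2) = n-1 by omega] at key
  constructor
  · rw [show 2*n+2 = (2*n+1)+1 by omega, Function.iterate_succ_apply', hC,
        kpair_a (by omega) (by omega) (by omega)]
    simp only [Prod.mk.injEq]; constructor <;> omega
  · intro t ht hdvd
    rcases Nat.eq_zero_or_pos t with rfl | h1
    · simp only [Function.iterate_zero, id_eq] at hdvd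
      exact absurd (Nat.le_of_dvd (by norm_num) hdvd.2) (by omega)
    rcases Nat.lt_or_ge t (n-2) with h2 | h2
    · rw [hA t h1 (by omega)] at hdvd
      have hfst := hdvd.1
      rw [show (5:ℕ)*2^t = 2^t*5 by ring] at hfst
      exact coord_not_dvd (by omega) ⟨2, by norm_num⟩
        (by have := Nat.two_pow_pos (n-t); omega) hfst
    rcases Nat.lt_or_ge t (n+3) with h3 | h3
    · rcases (by omega : n-2 = t ∨ n-1 = t ∨ n = t ∨ n+1 = t ∨ n+2 = t)
        with rfl | rfl | rfl | rfl | rfl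
      · rw [hE1] at hdvd
        exact not_dvd_odd (by omega) ⟨35*2^(n-4) - 1, by omega⟩ hdvd.1
      · rw [hE2] at hdvd
        have d := Nat.dvd_sub hdvd.1 hdvd.2
        rw [show 5*2^n - 5*2^(n-2) - (5*2^n - 5*2^(n-2) - 2) = 2 by omega] at d
        exact absurd (Nat.le_of_dvd (by norm_num) d) (by omega)
      · rw [hE3] at hdvd
        have d := Nat.dvd_sub hdvd.1 hdvd.2
        rw [show 5*2^(n-1) - (5*2^(n-1) - 4) = 4 by omega] at d
        exact absurd (Nat.le_of_dvd (by norm_num) d) (by omega)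
      · rw [hE4] at hdvd
        exact absurd (Nat.le_of_dvd (by norm_num) hdvd.1) (by omega)
      · rw [hE5] at hdvd
        exact absurd (Nat.le_of_dvd (by norm_num) hdvd.2) (by omega)
    · obtain ⟨i, rfl⟩ : ∃ i, t = i + (n+3) := ⟨t-(n+3), by omega⟩
      have hle : (2:ℕ)^(1+i) ≤ 2^(n-1) := Nat.pow_le_pow_right (by norm_num) (by omega)
      rw [Function.iterate_add_apply, hE6,
          phaseC_iter n 7 ⟨3, by norm_num⟩ i 1 le_rfl (by omega)] at hdvd
      have d := Nat.dvd_sub hdvd.1 hdvd.2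
      rw [show 5*2^n - 2^(1+i)*7 - (5*2^n - 2^(1+i)*8) = 2^(1+i) by omega] at d
      have := Nat.le_of_dvd (Nat.two_pow_pos _) d
      omega

lemma group3_4 (n : ℕ) (hn : 5 ≤ n) :
    (Kpair (5*2^n))^[2*n+2] (5*2^4, 5) = (1*2^n, 0) ∧
    (∀ t, t < 2*n+2 →
      ¬(2^n ∣ ((Kpair (5*2^n))^[t] (5*2^4,5)).1 ∧ 2^n ∣ ((Kpair (5*2^n))^[t] (5*2^4,5)).2)) := by
  have h32 : (32:ℕ) ≤ 2^n := by
    calc (32:ℕ) = 2^5 := by norm_num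
    _ ≤ 2^n := Nat.pow_le_pow_right (by norm_num) hn
  have fn : (2:ℕ)^n = 2*2^(n-1) := pow_split (by omega)
  have fn2 : (2:ℕ)^(n-1) = 2*2^(n-2) := pow_split (by omega)
  have fn3 : (2:ℕ)^(n-2) = 2*2^(n-3) := pow_split (by omega)
  have fn4 : (2:ℕ)^(n-3) = 2*2^(n-4) := pow_split (by omega)
  have fn5 : (2:ℕ)^(n-4) = 2*2^(n-5) := pow_split (by omega)
  have hA := phaseA3 n 4 hn (by omega) (by omega)
  have hA' : (Kpair (5*2^n))^[n-4] (5*2^4, 5) = (5*2^n - 5*2^(n-4), 0) := by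
    rw [hA (n-4) (by omega) (by omega), show 4+(n-4) = n by omega]
    norm_num
  have hE1 : (Kpair (5*2^n))^[n-3] (5*2^4, 5)
      = (5*2^n - 5*2^(n-4) - 1, 5*2^(n-4)) := by
    have key : (Kpair (5*2^n))^[(n-4)+1] (5*2^4, 5)
        = (5*2^n - 5*2^(n-4) - 1, 5*2^(n-4)) := by
      rw [Function.iterate_succ_apply', hA', kpair_c (by omega)]
      simp only [Prod.mk.injEq]; constructor <;> omega
    rwa [show n-4+1 = n-3 by omega] at key
  have hE2 : (Kpair (5*2^n))^[n-2] (5*2^4, 5)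
      = (5*2^n - 5*2^(n-3), 5*2^n - 5*2^(n-3) - 2) := by
    have key : (Kpair (5*2^n))^[(n-3)+1] (5*2^4, 5)
        = (5*2^n - 5*2^(n-3), 5*2^n - 5*2^(n-3) - 2) := by
      rw [Function.iterate_succ_apply', hE1, kpair_a (by omega) (by omega) (by omega)]
      simp only [Prod.mk.injEq]; constructor <;> omega
    rwa [show n-3+1 = n-2 by omega] at key
  have hE3 : (Kpair (5*2^n))^[n-1] (5*2^4, 5)
      = (5*2^n - 5*2^(n-2), 5*2^n - 5*2^(n-2) - 4) := by
    have key : (Kpair (5*2^n))^[(n-2)+1] (5*2^4, 5)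
        = (5*2^n - 5*2^(n-2), 5*2^n - 5*2^(n-2) - 4) := by
      rw [Function.iterate_succ_apply', hE2, kpair_a (by omega) (by omega) (by omega)]
      simp only [Prod.mk.injEq]; constructor <;> omega
    rwa [show n-2+1 = n-1 by omega] at key
  have hE4 : (Kpair (5*2^n))^[n] (5*2^4, 5) = (5*2^(n-1), 5*2^(n-1) - 8) := by
    have key : (Kpair (5*2^n))^[(n-1)+1] (5*2^4, 5) = (5*2^(n-1), 5*2^(n-1) - 8) := by
      rw [Function.iterate_succ_apply', hE3, kpair_a (by omega) (by omega) (by omega)]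
      simp only [Prod.mk.injEq]; constructor <;> omega
    rwa [show n-1+1 = n by omega] at key
  have hE5 : (Kpair (5*2^n))^[n+1] (5*2^4, 5) = (16, 0) := by
    rw [Function.iterate_succ_apply', hE4, kpair_a (by omega) (by omega) (by omega)]
    simp only [Prod.mk.injEq]; constructor <;> omega
  have hE6 : (Kpair (5*2^n))^[n+2] (5*2^4, 5) = (5*2^n - 16, 15) := by
    rw [Function.iterate_succ_apply', hE5, kpair_c (by omega)]
    simp only [Prod.mk.injEq]; constructor <;> omega
  have hE7 : (Kpair (5*2^n))^[n+3] (5*2^4, 5) = (5*2^n - 2^1*15, 5*2^n - 2^1*16) := by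
    rw [Function.iterate_succ_apply', hE6, kpair_a (by omega) (by omega) (by omega)]
    have e1 : (2:ℕ)^1 = 2 := by norm_num
    simp only [Prod.mk.injEq]; constructor <;> omega
  have hC : (Kpair (5*2^n))^[2*n] (5*2^4, 5)
      = (5*2^n - 2^(n-2)*15, 5*2^n - 2^(n-2)*16) := by
    have key : (Kpair (5*2^n))^[(n-3)+(n+3)] (5*2^4, 5)
        = (5*2^n - 2^(1+(n-3))*15, 5*2^n - 2^(1+(n-3))*16) := by
      rw [Function.iterate_add_apply, hE7]
      exact phaseC_iter n 15 ⟨7, by norm_num⟩ (n-3) 1 le_rfl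
        (by rw [show 1+(n-3) = n-2 by omega]; omega)
    rwa [show (n-3)+(n+3) = 2*n by omega, show 1+(n-3) = n-2 by omega] at key
  have hC2 : (Kpair (5*2^n))^[2*n+1] (5*2^4, 5) = (3*2^n, 5*2^(n-1)) := by
    rw [show 2*n+1 = (2*n)+1 by omega, Function.iterate_succ_apply', hC,
        kpair_a (by omega) (by omega) (by omega)]
    simp only [Prod.mk.injEq]; constructor <;> omega
  constructor
  · rw [show 2*n+2 = (2*n+1)+1 by omega, Function.iterate_succ_apply', hC2,
        kpair_a (by omega) (by omega) (by omega)]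
    simp only [Prod.mk.injEq]; constructor <;> omega
  · intro t ht hdvd
    rcases Nat.eq_zero_or_pos t with rfl | h1
    · simp only [Function.iterate_zero, id_eq] at hdvd
      exact absurd (Nat.le_of_dvd (by norm_num) hdvd.2) (by omega)
    rcases Nat.lt_or_ge t (n-3) with h2 | h2
    · rw [hA t h1 (by omega)] at hdvd
      have hfst := hdvd.1
      rw [show (5:ℕ)*2^t = 2^t*5 by ring] at hfst
      exact coord_not_dvd (by omega) ⟨2, by norm_num⟩
        (by have := Nat.two_pow_pos (n-t); omega) hfst
    rcases Nat.lt_or_ge t (n+3) with h3 | h3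
    · rcases (by omega : n-3 = t ∨ n-2 = t ∨ n-1 = t ∨ n = t ∨ n+1 = t ∨ n+2 = t)
        with rfl | rfl | rfl | rfl | rfl | rfl
      · rw [hE1] at hdvd
        exact not_dvd_odd (by omega) ⟨75*2^(n-5) - 1, by omega⟩ hdvd.1
      · rw [hE2] at hdvd
        have d := Nat.dvd_sub hdvd.1 hdvd.2
        rw [show 5*2^n - 5*2^(n-3) - (5*2^n - 5*2^(n-3) - 2) = 2 by omega] at d
        exact absurd (Nat.le_of_dvd (by norm_num) d) (by omega)
      · rw [hE3] at hdvd
        have d := Nat.dvd_sub hdvd.1 hdvd.2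
        rw [show 5*2^n - 5*2^(n-2) - (5*2^n - 5*2^(n-2) - 4) = 4 by omega] at d
        exact absurd (Nat.le_of_dvd (by norm_num) d) (by omega)
      · rw [hE4] at hdvd
        have d := Nat.dvd_sub hdvd.1 hdvd.2
        rw [show 5*2^(n-1) - (5*2^(n-1) - 8) = 8 by omega] at d
        exact absurd (Nat.le_of_dvd (by norm_num) d) (by omega)
      · rw [hE5] at hdvd
        exact absurd (Nat.le_of_dvd (by norm_num) hdvd.1) (by omega)
      · rw [hE6] at hdvd
        exact absurd (Nat.le_of_dvd (by norm_num) hdvd.2) (by omega)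
    rcases Nat.lt_or_ge t (2*n+1) with h4 | h4
    · obtain ⟨i, rfl⟩ : ∃ i, t = i + (n+3) := ⟨t-(n+3), by omega⟩
      have hle : (2:ℕ)^(1+i) ≤ 2^(n-2) := Nat.pow_le_pow_right (by norm_num) (by omega)
      rw [Function.iterate_add_apply, hE7,
          phaseC_iter n 15 ⟨7, by norm_num⟩ i 1 le_rfl (by omega)] at hdvd
      have d := Nat.dvd_sub hdvd.1 hdvd.2
      rw [show 5*2^n - 2^(1+i)*15 - (5*2^n - 2^(1+i)*16) = 2^(1+i) by omega] at d
      have := Nat.le_of_dvd (Nat.two_pow_pos _) d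
      omega
    · obtain rfl : 2*n+1 = t := by omega
      rw [hC2] at hdvd
      have d := Nat.dvd_sub hdvd.1 hdvd.2
      rw [show 3*2^n - 5*2^(n-1) = 2^(n-1) by omega] at d
      have := Nat.le_of_dvd (Nat.two_pow_pos _) d
      omega

/-- for `b = 5·2^n`, `n ≥ 5`, the bounds of
Proposition "predecessor length" are attained for every `(p, q)`. -/
theorem kaprekar_predecessor_length_tight (n b : ℕ) (hn : 5 ≤ n)
    (hb : b = 5 * 2 ^ n) (p q : ℕ) (hq : q < p) (hp : p ≤ 4)
    (hne : (p, q) ≠ (3, 1)) :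
    ∃ u v L : ℕ, IsDiffPair b (u, v) ∧
      IsLeast {t : ℕ | 2 ^ n ∣ ((Kpair b)^[t] (u, v)).1 ∧
                       2 ^ n ∣ ((Kpair b)^[t] (u, v)).2} L ∧
      (Kpair b)^[L] (u, v) = (p * 2 ^ n, q * 2 ^ n) ∧
      L = (if (p, q) = (4, 1) ∨ (p, q) = (3, 0) ∨ (p, q) = (4, 0) then n
           else if (p, q) = (4, 2) ∨ (p, q) = (2, 0) then 2 * n
           else 2 * n + 2) := by
  subst hb
  have h32 : (32:ℕ) ≤ 2^n := by
    calc (32:ℕ) = 2^5 := by norm_num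
    _ ≤ 2^n := Nat.pow_le_pow_right (by norm_num) hn
  have h16 : (16:ℕ) ≤ 2^n := by omega
  -- helpers for group 1 cases
  have G1 : ∀ c c' : ℕ, 1 ≤ c' → c' < c → c ≤ 5 → c + c' ≤ 9 → (Odd c ∨ Odd c') →
      IsLeast {t : ℕ | 2 ^ n ∣ ((Kpair (5*2^n))^[t] (c, c')).1 ∧
                       2 ^ n ∣ ((Kpair (5*2^n))^[t] (c, c')).2} n ∧
      (Kpair (5*2^n))^[n] (c, c') = ((5-c') * 2 ^ n, (5-c) * 2 ^ n) := by
    intro c c' h1 h2 h3 h4 hodd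
    have hval : (Kpair (5*2^n))^[n] (c, c') = ((5-c') * 2 ^ n, (5-c) * 2 ^ n) := by
      rw [group1_final n c c' hn h1 h2 h3 h4]
      have e1 : 2^n*c ≤ 2^n*5 := Nat.mul_le_mul le_rfl h3
      have e2 : 2^n*c' ≤ 2^n*5 := Nat.mul_le_mul le_rfl (by omega)
      have m1 : c'*2^n = 2^n*c' := mul_comm _ _
      have m2 : c*2^n = 2^n*c := mul_comm _ _
      have e3 : (5-c')*2^n = 5*2^n - c'*2^n := Nat.sub_mul _ _ _
      have e4 : (5-c)*2^n = 5*2^n - c*2^n := Nat.sub_mul _ _ _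
      simp only [Prod.mk.injEq]; constructor <;> omega
    refine ⟨⟨?_, ?_⟩, hval⟩
    · simp only [Set.mem_setOf_eq, hval]
      exact ⟨⟨5-c', by ring⟩, ⟨5-c, by ring⟩⟩
    · intro x hx
      by_contra hlt
      push_neg at hlt
      simp only [Set.mem_setOf_eq] at hx
      rcases Nat.eq_zero_or_pos x with rfl | hx1
      · simp only [Function.iterate_zero, id_eq] at hx
        exact absurd (Nat.le_of_dvd (by omega) hx.2) (by omega)
      · rw [phaseA n c c' hn h1 h2 (by omega) (by omega) x hx1 (by omega)] at hx
        have h2x : (2:ℕ) ≤ 2^(n-x) := by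
          calc (2:ℕ) = 2^1 := by norm_num
          _ ≤ 2^(n-x) := Nat.pow_le_pow_right (by norm_num) (by omega)
        rcases hodd with ho | ho
        · exact coord_not_dvd (by omega) ho (by omega) hx.2
        · exact coord_not_dvd (by omega) ho (by omega) hx.1
  have hp1 : 1 ≤ p := by omega
  interval_cases p <;> interval_cases q
  -- (1, 0)
  · obtain ⟨hval, hlb⟩ := group3_4 n hn
    refine ⟨5*2^4, 5, 2*n+2, ⟨by norm_num, by omega⟩, ⟨?_, ?_⟩, ?_, by norm_num⟩
    · simp only [Set.mem_setOf_eq, hval]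
      exact ⟨⟨1, by ring⟩, dvd_zero _⟩
    · intro x hx
      by_contra hlt
      push_neg at hlt
      exact hlb x (by omega) hx
    · rw [hval]; try norm_num
  -- (2, 0)
  · rcases Nat.even_or_odd n with he | ho
    · obtain ⟨hval, hlb⟩ := group2 n 9 1 1 hn (Or.inl ⟨rfl, rfl⟩)
        (by rw [if_neg (by rintro ⟨w, hw⟩; obtain ⟨r, hr⟩ := he; omega)])
      refine ⟨9, 1, 2*n, ⟨by norm_num, by omega⟩, ⟨?_, ?_⟩, ?_, by norm_num⟩
      · simp only [Set.mem_setOf_eq, hval]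
        exact ⟨⟨2, by ring⟩, ⟨0, by ring⟩⟩
      · intro x hx
        by_contra hlt
        push_neg at hlt
        exact hlb x (by omega) hx
      · rw [hval]; try norm_num
    · obtain ⟨hval, hlb⟩ := group2 n 7 3 1 hn (Or.inr ⟨rfl, rfl⟩)
        (by rw [if_pos (by obtain ⟨w, hw⟩ := ho; exact ⟨w, by omega⟩)])
      refine ⟨7, 3, 2*n, ⟨by norm_num, by omega⟩, ⟨?_, ?_⟩, ?_, by norm_num⟩
      · simp only [Set.mem_setOf_eq, hval]
        exact ⟨⟨2, by ring⟩, ⟨0, by ring⟩⟩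
      · intro x hx
        by_contra hlt
        push_neg at hlt
        exact hlb x (by omega) hx
      · rw [hval]; try norm_num
  -- (2, 1)
  · obtain ⟨hval, hlb⟩ := group3_2 n hn
    refine ⟨5*2^2, 5, 2*n+2, ⟨by norm_num, by omega⟩, ⟨?_, ?_⟩, ?_, by norm_num⟩
    · simp only [Set.mem_setOf_eq, hval]
      exact ⟨⟨2, by ring⟩, ⟨1, by ring⟩⟩
    · intro x hx
      by_contra hlt
      push_neg at hlt
      exact hlb x (by omega) hx
    · rw [hval]; try norm_num
  -- (3, 0)
  · obtain ⟨hL, hval⟩ := G1 5 2 (by norm_num) (by norm_num) (by norm_num) (by norm_num)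
      (Or.inl ⟨2, by norm_num⟩)
    exact ⟨5, 2, n, ⟨by norm_num, by omega⟩, hL, by rw [hval], by norm_num⟩
  -- (3, 1)
  · exact absurd rfl hne
  -- (3, 2)
  · obtain ⟨hval, hlb⟩ := group3_3 n hn
    refine ⟨5*2^3, 5, 2*n+2, ⟨by norm_num, by omega⟩, ⟨?_, ?_⟩, ?_, by norm_num⟩
    · simp only [Set.mem_setOf_eq, hval]
      exact ⟨⟨3, by ring⟩, ⟨2, by ring⟩⟩
    · intro x hx
      by_contra hlt
      push_neg at hlt
      exact hlb x (by omega) hx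
    · rw [hval]; try norm_num
  -- (4, 0)
  · obtain ⟨hL, hval⟩ := G1 5 1 (by norm_num) (by norm_num) (by norm_num) (by norm_num)
      (Or.inl ⟨2, by norm_num⟩)
    exact ⟨5, 1, n, ⟨by norm_num, by omega⟩, hL, by rw [hval], by norm_num⟩
  -- (4, 1)
  · obtain ⟨hL, hval⟩ := G1 4 1 (by norm_num) (by norm_num) (by norm_num) (by norm_num)
      (Or.inr ⟨0, by norm_num⟩)
    exact ⟨4, 1, n, ⟨by norm_num, by omega⟩, hL, by rw [hval], by norm_num⟩
  -- (4, 2)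
  · rcases Nat.even_or_odd n with he | ho
    · obtain ⟨hval, hlb⟩ := group2 n 7 3 3 hn (Or.inr ⟨rfl, rfl⟩)
        (by rw [if_neg (by rintro ⟨w, hw⟩; obtain ⟨r, hr⟩ := he; omega)])
      refine ⟨7, 3, 2*n, ⟨by norm_num, by omega⟩, ⟨?_, ?_⟩, ?_, by norm_num⟩
      · simp only [Set.mem_setOf_eq, hval]
        exact ⟨⟨4, by ring⟩, ⟨2, by ring⟩⟩
      · intro x hx
        by_contra hlt
        push_neg at hlt
        exact hlb x (by omega) hx
      · rw [hval]; try norm_num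
    · obtain ⟨hval, hlb⟩ := group2 n 9 1 3 hn (Or.inl ⟨rfl, rfl⟩)
        (by rw [if_pos (by obtain ⟨w, hw⟩ := ho; exact ⟨w, by omega⟩)])
      refine ⟨9, 1, 2*n, ⟨by norm_num, by omega⟩, ⟨?_, ?_⟩, ?_, by norm_num⟩
      · simp only [Set.mem_setOf_eq, hval]
        exact ⟨⟨4, by ring⟩, ⟨2, by ring⟩⟩
      · intro x hx
        by_contra hlt
        push_neg at hlt
        exact hlb x (by omega) hx
      · rw [hval]; try norm_num
  -- (4, 3)
  · obtain ⟨hval, hlb⟩ := group3_1 n hn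
    refine ⟨5*2^1, 5, 2*n+2, ⟨by norm_num, by omega⟩, ⟨?_, ?_⟩, ?_, by norm_num⟩
    · simp only [Set.mem_setOf_eq, hval]
      exact ⟨⟨4, by ring⟩, ⟨3, by ring⟩⟩
    · intro x hx
      by_contra hlt
      push_neg at hlt
      exact hlb x (by omega) hx
    · rw [hval]; try norm_num
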